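/- Let F be a distribution function with left-continuous inverse F⁻¹, and define σ²(u, 1-v) = ∫_u^{1-v} ∫_u^{1-v} (s∧t - st) dF⁻¹(s) dF⁻¹(t) for 0 ≤ u < 1-v ≤ 1. Then for any nondegenerate F, limsup_{u,v ↓ 0} [ u (F⁻¹(u))² + v (F⁻¹(1-v))² ] / σ²(u, 1-v) < ∞. -/

import Mathlib

open MeasureTheory

lemma integrableOn_of_bound' {f : ℝ → ℝ} {s : Set ℝ} {ν : Measure ℝ}
    (hs : ν s ≠ ⊤) (hms : MeasurableSet s) (hf : AEStronglyMeasurable f (ν.restrict s))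
    (C : ℝ) (hC : ∀ x ∈ s, ‖f x‖ ≤ C) : IntegrableOn f s ν := by
  refine Integrable.mono' ((integrableOn_const hs) : IntegrableOn (fun _ => C) s ν) hf ?_
  exact (ae_restrict_iff' hms).mpr (Filter.Eventually.of_forall hC)

lemma box_lower_bound
    (Finv : ℝ → ℝ) (hmono : MonotoneOn Finv (Set.Ioo 0 1))
    (ν : Measure ℝ)
    (hν : ∀ a b, 0 < a → a ≤ b → b < 1 →
      ν (Set.Ico a b) = ENNReal.ofReal (Finv b - Finv a))
    (u w a b c : ℝ) (hu : 0 < u) (hua : u ≤ a) (hab : a ≤ b) (hbw : b ≤ w)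
    (hw : w < 1) (hc : 0 ≤ c)
    (hbound : ∀ s ∈ Set.Ico a b, ∀ t ∈ Set.Ico a b, c ≤ min s t - s * t) :
    c * (Finv b - Finv a)^2
      ≤ ∫ s in Set.Ico u w, ∫ t in Set.Ico u w, (min s t - s * t) ∂ν ∂ν := by
  have huw : u ≤ w := hua.trans (hab.trans hbw)
  have hI : MeasurableSet (Set.Ico u w) := measurableSet_Ico
  have hJ : MeasurableSet (Set.Ico a b) := measurableSet_Ico
  have hJI : Set.Ico a b ⊆ Set.Ico u w := Set.Ico_subset_Ico hua hbw
  have hνI : ν (Set.Ico u w) ≠ ⊤ := by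
    rw [hν u w hu huw hw]; exact ENNReal.ofReal_ne_top
  have hνJ : ν (Set.Ico a b) ≠ ⊤ := by
    rw [hν a b (hu.trans_le hua) hab (lt_of_le_of_lt hbw hw)]; exact ENNReal.ofReal_ne_top
  have hFab : 0 ≤ Finv b - Finv a := by
    rcases eq_or_lt_of_le hab with h | h
    · simp [h]
    · have := hmono (Set.mem_Ioo.mpr ⟨hu.trans_le hua, lt_of_lt_of_le h (hbw.trans hw.le)⟩)
        (Set.mem_Ioo.mpr ⟨hu.trans_le (hua.trans hab), lt_of_le_of_lt hbw hw⟩) hab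
      linarith
  have hνJval : (ν (Set.Ico a b)).toReal = Finv b - Finv a := by
    rw [hν a b (hu.trans_le hua) hab (lt_of_le_of_lt hbw hw), ENNReal.toReal_ofReal hFab]
  -- basic facts about the integrand
  have hcont : ∀ s : ℝ, Continuous (fun t : ℝ => min s t - s * t) :=
    fun s => (continuous_const.min continuous_id).sub (continuous_const.mul continuous_id)
  have hnn : ∀ s ∈ Set.Ico u w, ∀ t ∈ Set.Ico u w, 0 ≤ min s t - s * t := by
    intro s hs t ht
    have hs0 : 0 ≤ s := le_trans hu.le hs.1
    have ht0 : 0 ≤ t := le_trans hu.le ht.1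
    have hs1 : s ≤ 1 := le_trans hs.2.le hw.le
    have ht1 : t ≤ 1 := le_trans ht.2.le hw.le
    rcases le_total s t with h | h
    · rw [min_eq_left h]; nlinarith
    · rw [min_eq_right h]; nlinarith
  -- inner integrability for any s
  have hinner_int : ∀ s : ℝ, IntegrableOn (fun t => min s t - s * t) (Set.Ico u w) ν := by
    intro s
    refine integrableOn_of_bound' hνI hI ((hcont s).aestronglyMeasurable.restrict)
      (2 * max |s| 1) ?_
    intro t ht
    have ht1 : |t| ≤ 1 := by
      rw [abs_le]; constructor <;> [linarith [ht.1]; linarith [ht.2]]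
    have h1 : |min s t| ≤ max |s| 1 := by
      rcases le_total s t with h | h
      · rw [min_eq_left h]; exact le_max_of_le_left le_rfl
      · rw [min_eq_right h]; exact le_max_of_le_right ht1
    have h2 : |s * t| ≤ max |s| 1 := by
      rw [abs_mul]
      calc |s| * |t| ≤ |s| * 1 := by nlinarith [abs_nonneg s]
        _ ≤ max |s| 1 := by simp
    calc ‖min s t - s * t‖ ≤ |min s t| + |s * t| := abs_sub _ _
      _ ≤ 2 * max |s| 1 := by linarith
  set g : ℝ → ℝ := fun s => ∫ t in Set.Ico u w, (min s t - s * t) ∂ν with hgdef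
  -- measurability of g
  have hg_meas : Measurable g := by
    have hmin_int : ∀ s : ℝ, IntegrableOn (fun t => min s t) (Set.Ico u w) ν := by
      intro s
      refine integrableOn_of_bound' hνI hI
        ((continuous_const.min continuous_id).aestronglyMeasurable.restrict) (max |s| 1) ?_
      intro t ht
      have ht1 : |t| ≤ 1 := by
        rw [abs_le]; constructor <;> [linarith [ht.1]; linarith [ht.2]]
      rcases le_total s t with h | h
      · rw [show ‖min s t‖ = |min s t| from rfl, min_eq_left h]; exact le_max_of_le_left le_rfl
      · rw [show ‖min s t‖ = |min s t| from rfl, min_eq_right h]; exact le_max_of_le_right ht1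
    have ht_int : IntegrableOn (fun t : ℝ => t) (Set.Ico u w) ν := by
      refine integrableOn_of_bound' hνI hI (continuous_id.aestronglyMeasurable.restrict) 1 ?_
      intro t ht
      rw [Real.norm_eq_abs, abs_le]; constructor <;> [linarith [ht.1]; linarith [ht.2]]
    have hsplit : g = fun s => (∫ t in Set.Ico u w, min s t ∂ν)
        - s * ∫ t in Set.Ico u w, t ∂ν := by
      funext s
      show (∫ t in Set.Ico u w, (min s t - s * t) ∂ν) = _
      rw [integral_sub (hmin_int s) (ht_int.const_mul s), integral_const_mul]
    rw [hsplit]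
    have hA : Monotone (fun s => ∫ t in Set.Ico u w, min s t ∂ν) := by
      intro s1 s2 h
      exact integral_mono (hmin_int s1) (hmin_int s2) (fun t => min_le_min h le_rfl)
    exact (hA.measurable).sub (measurable_id.mul_const _)
  -- g is nonneg on I and bounded
  have hg_nonneg : ∀ s ∈ Set.Ico u w, 0 ≤ g s := by
    intro s hs
    exact setIntegral_nonneg hI (fun t ht => hnn s hs t ht)
  have hg_int : IntegrableOn g (Set.Ico u w) ν := by
    refine integrableOn_of_bound' hνI hI hg_meas.aestronglyMeasurable.restrict
      (2 * (ν (Set.Ico u w)).toReal) ?_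
    intro s hs
    have hs1 : |s| ≤ 1 := by
      rw [abs_le]; constructor <;> [linarith [hs.1, hu]; linarith [hs.2]]
    have : ‖∫ t in Set.Ico u w, (min s t - s * t) ∂ν‖ ≤ 2 * (ν (Set.Ico u w)).toReal := by
      refine norm_setIntegral_le_of_norm_le_const hνI.lt_top ?_
      intro t ht
      have ht1 : |t| ≤ 1 := by
        rw [abs_le]; constructor <;> [linarith [ht.1]; linarith [ht.2]]
      calc ‖min s t - s * t‖ ≤ |min s t| + |s * t| := abs_sub _ _
        _ ≤ 2 := by
            have h1 : |min s t| ≤ 1 := by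
              rcases le_total s t with h | h
              · rw [min_eq_left h]; exact hs1
              · rw [min_eq_right h]; exact ht1
            have h2 : |s * t| ≤ 1 := by rw [abs_mul]; nlinarith [abs_nonneg s, abs_nonneg t]
            linarith
    exact this
  -- lower bound for g on J
  have hg_lb : ∀ s ∈ Set.Ico a b, c * (Finv b - Finv a) ≤ g s := by
    intro s hs
    have step1 : ∫ t in Set.Ico a b, (min s t - s * t) ∂ν ≤ g s := by
      refine setIntegral_mono_set (hinner_int s) ?_ (HasSubset.Subset.eventuallyLE hJI)
      exact (ae_restrict_iff' hI).mpr (Filter.Eventually.of_forall (hnn s (hJI hs)))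
    have step2 : ∫ t in Set.Ico a b, c ∂ν ≤ ∫ t in Set.Ico a b, (min s t - s * t) ∂ν := by
      refine setIntegral_mono_on (integrableOn_const hνJ)
        ((hinner_int s).mono_set hJI) hJ ?_
      intro t ht
      exact hbound s hs t ht
    have : ∫ t in Set.Ico a b, c ∂ν = (Finv b - Finv a) * c := by
      rw [setIntegral_const, measureReal_def, hνJval, smul_eq_mul]
    rw [this] at step2
    calc c * (Finv b - Finv a) = (Finv b - Finv a) * c := by ring
      _ ≤ _ := step2.trans step1
  -- outer bound
  have outer1 : ∫ s in Set.Ico a b, g s ∂ν ≤ ∫ s in Set.Ico u w, g s ∂ν := by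
    refine setIntegral_mono_set hg_int ?_ (HasSubset.Subset.eventuallyLE hJI)
    exact (ae_restrict_iff' hI).mpr (Filter.Eventually.of_forall hg_nonneg)
  have outer2 : ∫ s in Set.Ico a b, (c * (Finv b - Finv a)) ∂ν ≤ ∫ s in Set.Ico a b, g s ∂ν := by
    refine setIntegral_mono_on (integrableOn_const hνJ)
      (hg_int.mono_set hJI) hJ hg_lb
  have : ∫ s in Set.Ico a b, (c * (Finv b - Finv a)) ∂ν
      = (Finv b - Finv a) * (c * (Finv b - Finv a)) := by
    rw [setIntegral_const, measureReal_def, hνJval, smul_eq_mul]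
  rw [this] at outer2
  calc c * (Finv b - Finv a)^2 = (Finv b - Finv a) * (c * (Finv b - Finv a)) := by ring
    _ ≤ _ := outer2.trans outer1

set_option maxHeartbeats 1000000 in
theorem winsorized_tail_dominated_by_truncated_variance
    (Finv : ℝ → ℝ) (hmono : MonotoneOn Finv (Set.Ioo 0 1))
    (hnondeg : ∃ p q, 0 < p ∧ p < q ∧ q < 1 ∧ Finv p < Finv q)
    (ν : Measure ℝ)
    (hν : ∀ a b, 0 < a → a ≤ b → b < 1 →
      ν (Set.Ico a b) = ENNReal.ofReal (Finv b - Finv a))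
    (σ2 : ℝ → ℝ → ℝ)
    (hσ2 : ∀ u v, σ2 u v
      = ∫ s in Set.Ico u (1 - v), ∫ t in Set.Ico u (1 - v), (min s t - s * t) ∂ν ∂ν) :
    ∃ C M : ℝ, 0 < M ∧ ∀ u v, 0 < u → u < M → 0 < v → v < M →
      u * (Finv u)^2 + v * (Finv (1 - v))^2 ≤ C * σ2 u v := by
  obtain ⟨p, q, hp, hpq, hq, hF⟩ := hnondeg
  set c0 : ℝ := p * (1 - q) * (Finv q - Finv p)^2 with hc0def
  have hc0 : 0 < c0 := by
    exact mul_pos (mul_pos hp (by linarith)) (pow_pos (by linarith) 2)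
  set M : ℝ := min p (1 - q) with hMdef
  have hM : 0 < M := lt_min hp (by linarith)
  refine ⟨2 / (1 - p) + 2 / q + 2 * M * ((Finv p)^2 + (Finv q)^2) / c0, M, hM, ?_⟩
  intro u v hu huM hv hvM
  have hup : u < p := lt_of_lt_of_le huM (min_le_left _ _)
  have hvq : v < 1 - q := lt_of_lt_of_le hvM (min_le_right _ _)
  have hq1v : q ≤ 1 - v := by linarith
  have h1v : 1 - v < 1 := by linarith
  have hp1 : p < 1 := hpq.trans hq
  -- three lower bounds on σ2 u v
  have H1 : u * (1 - p) * (Finv p - Finv u)^2 ≤ σ2 u v := by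
    rw [hσ2]
    refine box_lower_bound Finv hmono ν hν u (1 - v) u p (u * (1 - p)) hu le_rfl hup.le
      (by linarith) h1v (by nlinarith) ?_
    intro s hs t ht
    rcases le_total s t with h | h
    · rw [min_eq_left h]; nlinarith [hs.1, hs.2, ht.1, ht.2]
    · rw [min_eq_right h]; nlinarith [hs.1, hs.2, ht.1, ht.2]
  have H2 : q * v * (Finv (1 - v) - Finv q)^2 ≤ σ2 u v := by
    rw [hσ2]
    refine box_lower_bound Finv hmono ν hν u (1 - v) q (1 - v) (q * v)
      hu (by linarith) hq1v le_rfl h1v (mul_nonneg (by linarith) hv.le) ?_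
    intro s hs t ht
    rcases le_total s t with h | h
    · rw [min_eq_left h]; nlinarith [hs.1, hs.2, ht.1, ht.2]
    · rw [min_eq_right h]; nlinarith [hs.1, hs.2, ht.1, ht.2]
  have H3 : c0 ≤ σ2 u v := by
    rw [hσ2, hc0def]
    refine box_lower_bound Finv hmono ν hν u (1 - v) p q (p * (1 - q))
      hu hup.le hpq.le hq1v h1v (by nlinarith) ?_
    intro s hs t ht
    rcases le_total s t with h | h
    · rw [min_eq_left h]; nlinarith [hs.1, hs.2, ht.1, ht.2]
    · rw [min_eq_right h]; nlinarith [hs.1, hs.2, ht.1, ht.2]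
  set σ := σ2 u v with hσdef
  have hσpos : 0 < σ := lt_of_lt_of_le hc0 H3
  -- algebra
  have e1 : u * (Finv u)^2 ≤ 2 * (u * (Finv p - Finv u)^2) + 2 * u * (Finv p)^2 := by
    nlinarith [mul_nonneg hu.le (sq_nonneg (2 * Finv p - Finv u))]
  have e2 : v * (Finv (1 - v))^2
      ≤ 2 * (v * (Finv (1 - v) - Finv q)^2) + 2 * v * (Finv q)^2 := by
    nlinarith [mul_nonneg hv.le (sq_nonneg (2 * Finv q - Finv (1 - v)))]
  have d1 : 2 * (u * (Finv p - Finv u)^2) ≤ 2 / (1 - p) * σ := by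
    rw [div_mul_eq_mul_div, le_div_iff₀ (by linarith : (0:ℝ) < 1 - p)]
    nlinarith [H1]
  have d2 : 2 * (v * (Finv (1 - v) - Finv q)^2) ≤ 2 / q * σ := by
    rw [div_mul_eq_mul_div, le_div_iff₀ (hp.trans hpq)]
    nlinarith [H2]
  have d3 : 2 * u * (Finv p)^2 + 2 * v * (Finv q)^2
      ≤ 2 * M * ((Finv p)^2 + (Finv q)^2) / c0 * σ := by
    have h1 : 2 * u * (Finv p)^2 + 2 * v * (Finv q)^2
        ≤ 2 * M * ((Finv p)^2 + (Finv q)^2) := by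
      nlinarith [sq_nonneg (Finv p), sq_nonneg (Finv q), huM.le, hvM.le]
    have hknn : 0 ≤ 2 * M * ((Finv p)^2 + (Finv q)^2) / c0 :=
      div_nonneg (by nlinarith [hM.le, sq_nonneg (Finv p), sq_nonneg (Finv q)]) hc0.le
    have h2 : 2 * M * ((Finv p)^2 + (Finv q)^2) / c0 * c0
        ≤ 2 * M * ((Finv p)^2 + (Finv q)^2) / c0 * σ :=
      mul_le_mul_of_nonneg_left H3 hknn
    rw [div_mul_cancel₀ _ (ne_of_gt hc0)] at h2
    linarith
  have expand : (2 / (1 - p) + 2 / q + 2 * M * ((Finv p)^2 + (Finv q)^2) / c0) * σ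
      = 2 / (1 - p) * σ + 2 / q * σ + 2 * M * ((Finv p)^2 + (Finv q)^2) / c0 * σ := by
    ring
  rw [expand]
  linarith [e1, e2, d1, d2, d3]
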